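/- Let (x̄,ū) be a W^{1,1} local minimizer for (FP3). There is no subsegment [τ1,τ2] ⊆ [t0,T] with τ1 < τ2 such that −1 < x̄(t) < 1 for all t ∈ (τ1,τ2) and x̄(τ1) = x̄(τ2) = 1. -/

import Mathlib

open MeasureTheory Set

noncomputable section

/-- A feasible process for problem (FP3): `x` is the (absolutely continuous) state
trajectory, represented as the indefinite integral of its a.e. derivative `-a*u`,
`u` is a measurable control with values in `[-1,1]` a.e., the initial condition is
`x t0 = x0`, and the bilateral state constraint `-1 ≤ x t ≤ 1` holds on `[t0,T]`. -/
def FP3Feasible (a t0 T x0 : ℝ) (x u : ℝ → ℝ) : Prop :=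
  AEStronglyMeasurable u (volume.restrict (Icc t0 T)) ∧
  (∀ᵐ t ∂(volume.restrict (Icc t0 T)), u t ∈ Icc (-1 : ℝ) 1) ∧
  (∀ t ∈ Icc t0 T, x t = x0 + ∫ s in t0..t, -(a * u s)) ∧
  (∀ t ∈ Icc t0 T, x t ∈ Icc (-1 : ℝ) 1)

/-- The cost functional of (FP3) on the interval `[t1,t2]`. -/
def FP3Cost (lam t1 t2 : ℝ) (x u : ℝ → ℝ) : ℝ :=
  ∫ t in t1..t2, -(Real.exp (-(lam * t)) * (x t + u t))

/-- `(x,u)` is a `W^{1,1}` local minimizer of (FP3). -/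
def FP3LocalMin (a lam t0 T x0 : ℝ) (x u : ℝ → ℝ) : Prop :=
  FP3Feasible a t0 T x0 x u ∧
  ∃ δ > (0 : ℝ), ∀ y v, FP3Feasible a t0 T x0 y v →
    (∫ t in t0..T, |(-(a * v t)) - (-(a * u t))|) ≤ δ →
    FP3Cost lam t0 T x u ≤ FP3Cost lam t0 T y v

/-- `(x,u)` is a `W^{1,1}` global minimizer of (FP3). -/
def FP3GlobalMin (a lam t0 T x0 : ℝ) (x u : ℝ → ℝ) : Prop :=
  FP3Feasible a t0 T x0 x u ∧
  ∀ y v, FP3Feasible a t0 T x0 y v → FP3Cost lam t0 T x u ≤ FP3Cost lam t0 T y v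

/-- The function `Δ(t1,t2) = e^{-λ t1} - 2 e^{-λ (t1+t2)/2} + e^{-λ t2}`. -/
def FP3Delta (lam t1 t2 : ℝ) : ℝ :=
  Real.exp (-(lam * t1)) - 2 * Real.exp (-(lam * (t1 + t2) / 2)) + Real.exp (-(lam * t2))

/-- The characteristic constant `ρ = (1/λ) ln (a/(a-λ))` of (FP3). -/
def FP3rho (a lam : ℝ) : ℝ := (1 / lam) * Real.log (a / (a - lam))


private lemma fp3_swap {lam σ1 σ2 : ℝ} (h12 : σ1 ≤ σ2) {g : ℝ → ℝ}
    (hg : IntegrableOn g (Ioc σ1 σ2)) :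
    ∫ t in Ioc σ1 σ2, g t * (∫ r in Ioc t σ2, Real.exp (-(lam * r))) =
    ∫ r in Ioc σ1 σ2, Real.exp (-(lam * r)) * (∫ t in Ioc σ1 r, g t) := by
  set μ := volume.restrict (Ioc σ1 σ2) with hμ
  set E : ℝ → ℝ := fun r => Real.exp (-(lam * r)) with hE
  have hEc : Continuous E := by fun_prop
  set f : ℝ → ℝ → ℝ := fun t r => (Ici t).indicator (fun r' => g t * E r') r with hf
  have hfe : ∀ t r, f t r = if t ≤ r then g t * E r else 0 := by
    intro t r; simp [f, Set.indicator_apply, Set.mem_Ici]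
  have hgm : AEStronglyMeasurable g μ := hg.aestronglyMeasurable
  have hFm : AEStronglyMeasurable (Function.uncurry f) (μ.prod μ) := by
    have h1 : AEStronglyMeasurable (fun p : ℝ × ℝ => g p.1 * E p.2) (μ.prod μ) :=
      AEStronglyMeasurable.mul (f := fun p : ℝ × ℝ => g p.1) (g := fun p : ℝ × ℝ => E p.2)
        hgm.comp_fst hEc.aestronglyMeasurable.comp_snd
    have h2 : MeasurableSet {p : ℝ × ℝ | p.1 ≤ p.2} :=
      measurableSet_le measurable_fst measurable_snd
    have heq : Function.uncurry f = {p : ℝ × ℝ | p.1 ≤ p.2}.indicator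
        (fun p => g p.1 * E p.2) := by
      funext p
      simp [Function.uncurry, hfe, Set.indicator_apply]
    rw [heq]
    exact h1.indicator h2
  set C : ℝ := Real.exp (|lam| * (|σ1| + |σ2|)) with hC
  have hCpos : 0 < C := Real.exp_pos _
  have hEbd : ∀ r ∈ Ioc σ1 σ2, |E r| ≤ C := by
    intro r hr
    rw [abs_of_pos (Real.exp_pos _)]
    apply Real.exp_le_exp.2
    have h1 : |r| ≤ |σ1| + |σ2| := by
      rw [abs_le]
      constructor
      · have := neg_abs_le σ1; have := abs_nonneg σ2; linarith [hr.1]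
      · have := le_abs_self σ2; have := abs_nonneg σ1; linarith [hr.2]
    calc -(lam * r) ≤ |lam * r| := neg_le_abs _
      _ = |lam| * |r| := abs_mul _ _
      _ ≤ |lam| * (|σ1| + |σ2|) := by
          exact mul_le_mul_of_nonneg_left h1 (abs_nonneg _)
  have hEintIoc : ∀ c d : ℝ, IntegrableOn E (Ioc c d) volume := by
    intro c d
    exact (hEc.intervalIntegrable c d).1
  have hFint : Integrable (Function.uncurry f) (μ.prod μ) := by
    refine (integrable_prod_iff hFm).2 ⟨?_, ?_⟩
    · refine Filter.Eventually.of_forall fun t => ?_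
      have : Integrable (fun r => g t * E r) μ := (hEintIoc σ1 σ2).const_mul _
      exact this.indicator measurableSet_Ici
    · have hmeas2 : AEStronglyMeasurable
          (fun t => ∫ r, ‖f t r‖ ∂μ) μ := hFm.norm.integral_prod_right'
      refine Integrable.mono' ((hg.abs.mul_const (C * (σ2 - σ1)))) hmeas2 ?_
      refine Filter.Eventually.of_forall fun t => ?_
      simp only [Function.uncurry_apply_pair]
      have hnn : 0 ≤ ∫ r, ‖f t r‖ ∂μ := integral_nonneg fun r => norm_nonneg _
      rw [Real.norm_eq_abs, abs_of_nonneg hnn]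
      have hbd : ∀ᵐ r ∂μ, ‖f t r‖ ≤ |g t| * C := by
        rw [hμ]
        filter_upwards [ae_restrict_mem measurableSet_Ioc] with r hr
        rw [hfe]
        split_ifs with h
        · rw [Real.norm_eq_abs, abs_mul]
          exact mul_le_mul_of_nonneg_left (hEbd r hr) (abs_nonneg _)
        · simp [mul_nonneg (abs_nonneg (g t)) hCpos.le]
      calc ∫ r, ‖f t r‖ ∂μ ≤ ∫ _r, |g t| * C ∂μ := by
            refine integral_mono_of_nonneg (Filter.Eventually.of_forall fun r => norm_nonneg _)
              (integrable_const _) hbd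
        _ = |g t| * (C * (σ2 - σ1)) := by
            rw [integral_const]
            simp only [hμ, Measure.restrict_apply_univ, Real.volume_Ioc, smul_eq_mul]
            rw [measureReal_restrict_apply_univ, Real.volume_real_Ioc_of_le h12]
            ring
  calc ∫ t in Ioc σ1 σ2, g t * (∫ r in Ioc t σ2, E r)
      = ∫ t, (∫ r, f t r ∂μ) ∂μ := by
        refine setIntegral_congr_fun measurableSet_Ioc fun t ht => ?_
        have h1 : ∫ r, f t r ∂μ = ∫ r in Ioc σ1 σ2 ∩ Ici t, g t * E r := by
          rw [hμ]
          exact setIntegral_indicator measurableSet_Ici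
        have h2 : Ioc σ1 σ2 ∩ Ici t = Icc t σ2 := by
          ext r
          simp only [mem_inter_iff, mem_Ioc, mem_Ici, mem_Icc]
          constructor
          · rintro ⟨⟨_, hr2⟩, hr3⟩; exact ⟨hr3, hr2⟩
          · rintro ⟨hr1, hr2⟩; exact ⟨⟨lt_of_lt_of_le ht.1 hr1, hr2⟩, hr1⟩
        rw [h1, h2, integral_Icc_eq_integral_Ioc, integral_const_mul]
    _ = ∫ r, (∫ t, f t r ∂μ) ∂μ := integral_integral_swap hFint
    _ = ∫ r in Ioc σ1 σ2, E r * (∫ t in Ioc σ1 r, g t) := by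
        refine setIntegral_congr_fun measurableSet_Ioc fun r hr => ?_
        have h0 : (fun t => f t r) = (Iic r).indicator (fun t => g t * E r) := by
          funext t; simp [hfe, Set.indicator_apply, Set.mem_Iic]
        have h1 : ∫ t, f t r ∂μ = ∫ t in Ioc σ1 σ2 ∩ Iic r, g t * E r := by
          rw [hμ, h0]
          exact setIntegral_indicator measurableSet_Iic
        have h2 : Ioc σ1 σ2 ∩ Iic r = Ioc σ1 r := by
          rw [Ioc_inter_Iic, min_eq_right hr.2]
        rw [h1, h2, integral_mul_const, mul_comm]


private lemma fp3_ftc {lam : ℝ} (hlam : 0 < lam) (t σ2 : ℝ) :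
    lam * (∫ r in t..σ2, Real.exp (-(lam * r))) =
      Real.exp (-(lam * t)) - Real.exp (-(lam * σ2)) := by
  have hd : ∀ r : ℝ, HasDerivAt (fun s => -(1 / lam) * Real.exp (-(lam * s)))
      (Real.exp (-(lam * r))) r := by
    intro r
    have h1 : HasDerivAt (fun s : ℝ => -(lam * s)) (-lam) r := by
      have h := (hasDerivAt_id r).const_mul (-lam)
      simp only [id, mul_one, neg_mul] at h
      exact h
    have h2 := (Real.hasDerivAt_exp (-(lam * r))).comp r h1
    have h3 := h2.const_mul (-(1 / lam))
    refine h3.congr_deriv ?_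
    field_simp
  have hint : IntervalIntegrable (fun s => Real.exp (-(lam * s))) volume t σ2 :=
    (by fun_prop : Continuous fun s => Real.exp (-(lam * s))).intervalIntegrable t σ2
  rw [intervalIntegral.integral_eq_sub_of_hasDerivAt (fun r _ => hd r) hint]
  field_simp
  ring

private lemma fp3_parts {lam σ1 σ2 : ℝ} (hlam : 0 < lam) (h12 : σ1 ≤ σ2) {g : ℝ → ℝ}
    (hg : IntegrableOn g (Ioc σ1 σ2))
    (h0 : ∫ t in Ioc σ1 σ2, g t = 0) :
    ∫ t in Ioc σ1 σ2, Real.exp (-(lam * t)) * g t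
      = lam * ∫ r in Ioc σ1 σ2, Real.exp (-(lam * r)) * (∫ t in Ioc σ1 r, g t) := by
  set E : ℝ → ℝ := fun r => Real.exp (-(lam * r)) with hE
  have hEc : Continuous E := by fun_prop
  set H : ℝ → ℝ := fun t => (E t - E σ2) / lam with hH
  have hHc : Continuous H := by fun_prop
  have hHint : ∀ t, t ≤ σ2 → (∫ r in Ioc t σ2, E r) = H t := by
    intro t ht
    have := fp3_ftc hlam t σ2
    rw [intervalIntegral.integral_of_le ht] at this
    rw [hH]
    field_simp
    linarith [this]
  have hsplit : ∀ t, E t * g t = E σ2 * g t + lam * (g t * H t) := by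
    intro t
    rw [hH]
    field_simp
    ring
  have hgH : IntegrableOn (fun t => g t * H t) (Ioc σ1 σ2) volume := by
    have hg' : IntegrableOn g (Icc σ1 σ2) volume :=
      (integrableOn_Icc_iff_integrableOn_Ioc enorm_ne_top).2 hg
    exact (hg'.mul_continuousOn hHc.continuousOn isCompact_Icc).mono_set Ioc_subset_Icc_self
  calc ∫ t in Ioc σ1 σ2, E t * g t
      = ∫ t in Ioc σ1 σ2, (E σ2 * g t + lam * (g t * H t)) := by
        exact setIntegral_congr_fun measurableSet_Ioc fun t _ => hsplit t
    _ = E σ2 * (∫ t in Ioc σ1 σ2, g t) + lam * ∫ t in Ioc σ1 σ2, g t * H t := by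
        rw [integral_add (hg.const_mul _) (hgH.const_mul _), integral_const_mul,
          integral_const_mul]
    _ = lam * ∫ t in Ioc σ1 σ2, g t * H t := by rw [h0]; ring
    _ = lam * ∫ t in Ioc σ1 σ2, g t * (∫ r in Ioc t σ2, E r) := by
        congr 1
        refine setIntegral_congr_fun measurableSet_Ioc fun t ht => ?_
        rw [hHint t ht.2]
    _ = lam * ∫ r in Ioc σ1 σ2, E r * (∫ t in Ioc σ1 r, g t) := by
        rw [fp3_swap h12 hg]

open scoped Interval

set_option maxHeartbeats 8000000 in
/-- for a local minimizer, there is no subsegment `[τ1,τ2]` of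
`[t0,T]` with the trajectory in `(-1,1)` on `(τ1,τ2)` and equal to `1` at both
endpoints. -/
theorem fp3_statement_S4
    (a lam t0 T x0 : ℝ) (hal : lam < a) (hlam : 0 < lam)
    (ht0 : 0 ≤ t0) (htT : t0 < T) (hx0 : x0 ∈ Icc (-1 : ℝ) 1)
    (xb ub : ℝ → ℝ) (hmin : FP3LocalMin a lam t0 T x0 xb ub) :
    ¬ ∃ τ1 τ2 : ℝ, t0 ≤ τ1 ∧ τ1 < τ2 ∧ τ2 ≤ T ∧
      (∀ t ∈ Ioo τ1 τ2, xb t ∈ Ioo (-1 : ℝ) 1) ∧ xb τ1 = 1 ∧ xb τ2 = 1 := by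
  rintro ⟨τ1, τ2, ht01, h12, h2T, hopen, he1, he2⟩
  obtain ⟨⟨hmeas, hbound, hrep, hstate⟩, δ, hδ, hloc⟩ := hmin
  have ha : 0 < a := hlam.trans hal
  have haneq : a ≠ 0 := ne_of_gt ha
  have ht0T : t0 ∈ Icc t0 T := ⟨le_refl _, htT.le⟩
  have hTm : T ∈ Icc t0 T := ⟨htT.le, le_refl _⟩
  -- basic integrability of ub
  have hub_int : IntegrableOn ub (Icc t0 T) volume := by
    refine Integrable.mono' (integrable_const 1) hmeas ?_
    filter_upwards [hbound] with t ht
    rw [Real.norm_eq_abs, abs_le]; exact ⟨ht.1, ht.2⟩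
  have hsubI : ∀ {c d : ℝ}, c ∈ Icc t0 T → d ∈ Icc t0 T → Ι c d ⊆ Icc t0 T := by
    intro c d hc hd
    exact uIoc_subset_uIcc.trans (uIcc_subset_Icc hc hd)
  have hub_ii : ∀ {c d : ℝ}, c ∈ Icc t0 T → d ∈ Icc t0 T →
      IntervalIntegrable ub volume c d := fun hc hd =>
    intervalIntegrable_iff.2 (hub_int.mono_set (hsubI hc hd))
  have hubc_ii : ∀ {c d : ℝ}, c ∈ Icc t0 T → d ∈ Icc t0 T →
      IntervalIntegrable (fun u => -(a * ub u)) volume c d := fun hc hd =>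
    ((hub_ii hc hd).const_mul a).neg
  -- difference formula
  have hdiff : ∀ {c d : ℝ}, c ∈ Icc t0 T → d ∈ Icc t0 T →
      xb d - xb c = ∫ u in c..d, -(a * ub u) := by
    intro c d hc hd
    have h1 := intervalIntegral.integral_add_adjacent_intervals
      (hubc_ii ht0T hc) (hubc_ii hc hd)
    rw [hrep c hc, hrep d hd]
    linarith [h1]
  -- Lipschitz bound
  have hlip : ∀ {c d : ℝ}, c ∈ Icc t0 T → d ∈ Icc t0 T → c ≤ d →
      |xb d - xb c| ≤ a * (d - c) := by
    intro c d hc hd hcd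
    rw [hdiff hc hd]
    have h1 : |∫ u in c..d, -(a * ub u)| ≤ ∫ u in c..d, |(-(a * ub u))| :=
      intervalIntegral.abs_integral_le_integral_abs hcd
    have habs_ii : IntervalIntegrable (fun u => |(-(a * ub u))|) volume c d := by
      have := hubc_ii hc hd
      rw [intervalIntegrable_iff] at this ⊢
      exact this.abs
    have h2 : (∫ u in c..d, |(-(a * ub u))|) ≤ ∫ _u in c..d, a := by
      refine intervalIntegral.integral_mono_ae_restrict hcd habs_ii
        intervalIntegrable_const ?_
      have := ae_restrict_of_ae_restrict_of_subset
        (Icc_subset_Icc hc.1 hd.2 : Icc c d ⊆ Icc t0 T) hbound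
      filter_upwards [this] with u hu
      have hu1 : |ub u| ≤ 1 := abs_le.2 ⟨hu.1, hu.2⟩
      rw [abs_neg, abs_mul, abs_of_pos ha]
      have := mul_le_mul_of_nonneg_left hu1 ha.le
      linarith only [this]
    rw [intervalIntegral.integral_const, smul_eq_mul] at h2
    linarith
  -- continuity
  have hcont : ContinuousOn xb (Icc t0 T) := by
    have : LipschitzOnWith (Real.toNNReal a) xb (Icc t0 T) := by
      apply LipschitzOnWith.of_dist_le_mul
      intro p hp q hq
      rw [Real.dist_eq, Real.dist_eq, Real.coe_toNNReal a ha.le]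
      rcases le_total q p with hle | hle
      · have := hlip hq hp hle
        rwa [abs_of_nonneg (by linarith : (0:ℝ) ≤ p - q)]
      · have := hlip hp hq hle
        rw [abs_sub_comm (xb p), abs_sub_comm p] at *
        rwa [abs_of_nonneg (by linarith : (0:ℝ) ≤ q - p)]
    exact this.continuousOn
  -- the minimum point
  have hτ1 : τ1 ∈ Icc t0 T := ⟨ht01, h12.le.trans h2T⟩
  have hτ2 : τ2 ∈ Icc t0 T := ⟨ht01.trans h12.le, h2T⟩
  have hsub2 : Icc τ1 τ2 ⊆ Icc t0 T := Icc_subset_Icc ht01 h2T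
  obtain ⟨s, hsmem, hsmin'⟩ :=
    isCompact_Icc.exists_isMinOn (nonempty_Icc.2 h12.le) (hcont.mono hsub2)
  have hsmin : ∀ t ∈ Icc τ1 τ2, xb s ≤ xb t := isMinOn_iff.1 hsmin'
  have hmid : (τ1 + τ2)/2 ∈ Ioo τ1 τ2 := ⟨by linarith, by linarith⟩
  have hm1 : xb s < 1 :=
    lt_of_le_of_lt (hsmin _ (Ioo_subset_Icc_self hmid)) (hopen _ hmid).2
  have hs1 : τ1 < s := by
    rcases eq_or_lt_of_le hsmem.1 with h | h
    · rw [← h, he1] at hm1; exact absurd hm1 (lt_irrefl 1)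
    · exact h
  have hs2 : s < τ2 := by
    rcases eq_or_lt_of_le hsmem.2 with h | h
    · rw [h, he2] at hm1; exact absurd hm1 (lt_irrefl 1)
    · exact h
  have hsm : s ∈ Icc t0 T := hsub2 hsmem
  set m := xb s with hmdef
  -- half-width
  set h := min (min (s - τ1) (τ2 - s)) (min ((1 - m)/(2*a)) (δ/(4*a))) with hhdef
  have hh : 0 < h := by
    refine lt_min (lt_min (by linarith) (by linarith))
      (lt_min (div_pos (by linarith) (by linarith)) (div_pos hδ (by linarith)))
  have hh1 : h ≤ s - τ1 := le_trans (min_le_left _ _) (min_le_left _ _)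
  have hh2 : h ≤ τ2 - s := le_trans (min_le_left _ _) (min_le_right _ _)
  have hh3 : 2*a*h ≤ 1 - m := by
    have h' : h ≤ (1 - m)/(2*a) := le_trans (min_le_right _ _) (min_le_left _ _)
    rw [le_div_iff₀ (by linarith : (0:ℝ) < 2*a)] at h'
    linarith
  have hh4 : 4*a*h ≤ δ := by
    have h' : h ≤ δ/(4*a) := le_trans (min_le_right _ _) (min_le_right _ _)
    rw [le_div_iff₀ (by linarith : (0:ℝ) < 4*a)] at h'
    linarith
  set σ1 := s - h with hσ1def
  set σ2 := s + h with hσ2def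
  have hσlt : σ1 < σ2 := by rw [hσ1def, hσ2def]; linarith
  have hσle : σ1 ≤ σ2 := hσlt.le
  have hσ1m : σ1 ∈ Icc t0 T := ⟨by rw [hσ1def]; linarith [hτ1.1], by rw [hσ1def]; linarith [hsm.2]⟩
  have hσ2m : σ2 ∈ Icc t0 T := ⟨by rw [hσ2def]; linarith [hsm.1], by rw [hσ2def]; linarith [hτ2.2]⟩
  have hIccσ : Icc σ1 σ2 ⊆ Icc t0 T := Icc_subset_Icc hσ1m.1 hσ2m.2
  have hIccστ : Icc σ1 σ2 ⊆ Icc τ1 τ2 :=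
    Icc_subset_Icc (by rw [hσ1def]; linarith) (by rw [hσ2def]; linarith)
  have hσdiff : σ2 - σ1 = 2*h := by rw [hσ1def, hσ2def]; ring
  set c1 := xb σ1 with hc1def
  set c2 := xb σ2 with hc2def
  have hc1m : |c1 - m| ≤ a * h := by
    have := hlip hσ1m hsm (by rw [hσ1def]; linarith)
    rw [abs_sub_comm] at this
    have he : s - σ1 = h := by rw [hσ1def]; ring
    rw [he] at this
    exact this
  have hc2m : |c2 - m| ≤ a * h := by
    have := hlip hsm hσ2m (by rw [hσ2def]; linarith)
    have he : σ2 - s = h := by rw [hσ2def]; ring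
    rw [he] at this
    exact this
  have hc1a : c1 ≤ m + a*h := by have := (abs_le.1 hc1m).2; linarith
  have hc2a : c2 ≤ m + a*h := by have := (abs_le.1 hc2m).2; linarith
  have hc1b : m ≤ c1 := hsmin σ1 (hIccστ ⟨le_refl _, hσle⟩)
  have hc2b : m ≤ c2 := hsmin σ2 (hIccστ ⟨hσle, le_refl _⟩)
  have hc21 : |c2 - c1| ≤ 2*a*h := by
    have := hlip hσ1m hσ2m hσle
    rw [hσdiff] at this
    linarith [this]
  -- switching point
  set r := s + (c2 - c1)/(2*a) with hrdef
  have hσsum : σ1 + σ2 = 2*s := by rw [hσ1def, hσ2def]; ring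
  have hr2 : 2*a*(r - s) = c2 - c1 := by rw [hrdef]; field_simp; ring
  have hrσ1 : σ1 ≤ r := by
    have h1 := (abs_le.1 hc21).1
    rw [hσ1def, hrdef]
    have h2 : -h ≤ (c2 - c1)/(2*a) := by
      rw [le_div_iff₀ (by linarith : (0:ℝ) < 2*a)]
      linarith only [h1]
    linarith only [h2]
  have hrσ2 : r ≤ σ2 := by
    have h1 := (abs_le.1 hc21).2
    rw [hσ2def, hrdef]
    have h2 : (c2 - c1)/(2*a) ≤ h := by
      rw [div_le_iff₀ (by linarith : (0:ℝ) < 2*a)]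
      linarith only [h1]
    linarith only [h2]
  -- the tent function
  set z := fun t => min (c1 + a*(t - σ1)) (c2 + a*(σ2 - t)) with hzdef
  have hzc : Continuous z := by
    apply Continuous.min <;> fun_prop
  have hz1 : ∀ t, t ≤ r → z t = c1 + a*(t - σ1) := by
    intro t ht
    have hdiffid : c1 + a*(t - σ1) - (c2 + a*(σ2 - t)) = 2*a*t - 2*a*r := by
      linear_combination hr2 - a * hσsum
    have hkey : a*t ≤ a*r := mul_le_mul_of_nonneg_left ht ha.le
    apply min_eq_left; linarith only [hdiffid, hkey]
  have hz2 : ∀ t, r ≤ t → z t = c2 + a*(σ2 - t) := by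
    intro t ht
    have hdiffid : c1 + a*(t - σ1) - (c2 + a*(σ2 - t)) = 2*a*t - 2*a*r := by
      linear_combination hr2 - a * hσsum
    have hkey : a*r ≤ a*t := mul_le_mul_of_nonneg_left ht ha.le
    apply min_eq_right; linarith only [hdiffid, hkey]
  have hzσ1 : z σ1 = c1 := by rw [hz1 σ1 hrσ1]; ring
  have hzσ2 : z σ2 = c2 := by rw [hz2 σ2 hrσ2]; ring
  have hzub : ∀ t ∈ Icc σ1 σ2, z t ≤ 1 := by
    intro t ht
    have h1 : z t ≤ c1 + a*(t - σ1) := min_le_left _ _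
    have h2 : z t ≤ c2 + a*(σ2 - t) := min_le_right _ _
    have h3 : a*(t - σ1) + a*(σ2 - t) = 2*a*h := by
      have : a*(t - σ1) + a*(σ2 - t) = a*(σ2 - σ1) := by ring
      rw [this, hσdiff]; ring
    linarith only [h1, h2, h3, hc1a, hc2a, hh3]
  have hzlb : ∀ t ∈ Icc σ1 σ2, -1 ≤ z t := by
    intro t ht
    have h1 : -1 ≤ c1 := (hstate σ1 hσ1m).1
    have h2 : -1 ≤ c2 := (hstate σ2 hσ2m).1
    apply le_min
    · have h3 : 0 ≤ a*(t - σ1) := mul_nonneg ha.le (by linarith only [ht.1])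
      linarith only [h1, h3]
    · have h3 : 0 ≤ a*(σ2 - t) := mul_nonneg ha.le (by linarith only [ht.2])
      linarith only [h2, h3]
  have hzxb : ∀ t ∈ Icc σ1 σ2, xb t ≤ z t := by
    intro t ht
    have htm : t ∈ Icc t0 T := hIccσ ht
    apply le_min
    · have h1 := (abs_le.1 (hlip hσ1m htm ht.1)).2
      linarith only [h1]
    · have h1 := (abs_le.1 (hlip htm hσ2m ht.2)).1
      linarith only [h1]
  have hzs : m + a*h ≤ z s := by
    have he1 : s - σ1 = h := by rw [hσ1def]; ring
    have he2 : σ2 - s = h := by rw [hσ2def]; ring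
    apply le_min
    · rw [he1]; linarith only [hc1b]
    · rw [he2]; linarith only [hc2b]
  -- the control w
  set w := fun t => if t ≤ r then (-1:ℝ) else 1 with hwdef
  have hw_meas : Measurable w :=
    Measurable.ite measurableSet_Iic measurable_const measurable_const
  have hw_bd : ∀ t, |w t| ≤ 1 := by
    intro t; rw [hwdef]; dsimp only; split_ifs <;> norm_num
  have hw_mem : ∀ t, w t ∈ Icc (-1:ℝ) 1 := by
    intro t; rw [hwdef]; dsimp only; split_ifs <;> norm_num
  have hw_intOn : ∀ S : Set ℝ, MeasurableSet S → volume S < ⊤ →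
      IntegrableOn w S volume := by
    intro S hS hSfin
    refine Integrable.mono' (g := fun _ => (1:ℝ)) (integrableOn_const hSfin.ne)
      (hw_meas.aestronglyMeasurable) ?_
    exact Filter.Eventually.of_forall fun t => by
      rw [Real.norm_eq_abs]; exact hw_bd t
  have hw_ii : ∀ c d : ℝ, IntervalIntegrable (fun u => -(a * w u)) volume c d := by
    intro c d
    rw [intervalIntegrable_iff]
    have : IntegrableOn w (Ι c d) volume :=
      hw_intOn _ measurableSet_uIoc measure_Ioc_lt_top
    exact (this.const_mul a).neg
  -- integral of the tent control
  have hWz : ∀ t ∈ Icc σ1 σ2, (∫ u in σ1..t, -(a * w u)) = z t - c1 := by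
    intro t ht
    rcases le_or_gt t r with hcase | hcase
    · have hEqOn : EqOn (fun u => -(a * w u)) (fun _ => a) (uIcc σ1 t) := by
        intro u hu
        rw [uIcc_of_le ht.1] at hu
        have hur : u ≤ r := le_trans hu.2 hcase
        simp [hwdef, if_pos hur]
      rw [intervalIntegral.integral_congr hEqOn, intervalIntegral.integral_const,
        hz1 t hcase, smul_eq_mul]
      ring
    · have h1 : (∫ u in σ1..r, -(a * w u)) = a * (r - σ1) := by
        have hEqOn : EqOn (fun u => -(a * w u)) (fun _ => a) (uIcc σ1 r) := by
          intro u hu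
          rw [uIcc_of_le hrσ1] at hu
          simp [hwdef, if_pos hu.2]
        rw [intervalIntegral.integral_congr hEqOn, intervalIntegral.integral_const,
          smul_eq_mul]
        ring
      have h2 : (∫ u in r..t, -(a * w u)) = -(a * (t - r)) := by
        have hae : ∀ᵐ u ∂(volume : Measure ℝ), u ∈ Ι r t → -(a * w u) = -a := by
          refine Filter.Eventually.of_forall fun u hu => ?_
          rw [uIoc_of_le hcase.le] at hu
          simp [hwdef, if_neg (not_le.2 hu.1)]
        rw [intervalIntegral.integral_congr_ae hae, intervalIntegral.integral_const,
          smul_eq_mul]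
        ring
      have h3 := intervalIntegral.integral_add_adjacent_intervals
        (hw_ii σ1 r) (hw_ii r t)
      rw [← h3, h1, h2, hz2 t hcase.le]
      linear_combination hr2 - a * hσsum
  -- the perturbed control and trajectory
  set v := fun t => if σ1 ≤ t ∧ t ≤ σ2 then w t else ub t with hvdef
  have hv_in : ∀ t, σ1 ≤ t → t ≤ σ2 → v t = w t := by
    intro t h1 h2; rw [hvdef]; exact if_pos ⟨h1, h2⟩
  have hv_out : ∀ t, ¬(σ1 ≤ t ∧ t ≤ σ2) → v t = ub t := by
    intro t h1; rw [hvdef]; exact if_neg h1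
  have hv_meas : AEStronglyMeasurable v (volume.restrict (Icc t0 T)) := by
    have hveq : v = fun t => (Icc σ1 σ2).indicator w t + (Icc σ1 σ2)ᶜ.indicator ub t := by
      funext t
      by_cases hmem : t ∈ Icc σ1 σ2
      · rw [hv_in t hmem.1 hmem.2, Set.indicator_of_mem hmem,
          Set.indicator_of_notMem (by simp [hmem]), add_zero]
      · rw [hv_out t (fun hc => hmem ⟨hc.1, hc.2⟩),
          Set.indicator_of_notMem hmem, Set.indicator_of_mem (by simp [hmem]), zero_add]
    rw [hveq]
    exact ((hw_meas.aestronglyMeasurable).indicator measurableSet_Icc).add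
      (hmeas.indicator measurableSet_Icc.compl)
  have hv_bound : ∀ᵐ t ∂(volume.restrict (Icc t0 T)), v t ∈ Icc (-1:ℝ) 1 := by
    filter_upwards [hbound] with t ht
    by_cases hmem : σ1 ≤ t ∧ t ≤ σ2
    · rw [hv_in t hmem.1 hmem.2]; exact hw_mem t
    · rw [hv_out t hmem]; exact ht
  have hv_int : IntegrableOn v (Icc t0 T) volume := by
    refine Integrable.mono' (integrable_const 1) hv_meas ?_
    filter_upwards [hv_bound] with t ht
    rw [Real.norm_eq_abs, abs_le]; exact ⟨ht.1, ht.2⟩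
  have hv_ii : ∀ {c d : ℝ}, c ∈ Icc t0 T → d ∈ Icc t0 T →
      IntervalIntegrable (fun u => -(a * v u)) volume c d := fun hc hd =>
    ((intervalIntegrable_iff.2 (hv_int.mono_set (hsubI hc hd))).const_mul a).neg
  set y := fun t => x0 + ∫ u in t0..t, -(a * v u) with hydef
  have hae_ne : ∀ c : ℝ, ∀ᵐ u : ℝ ∂volume, u ≠ c := by
    intro c
    rw [ae_iff]
    have hset : {u : ℝ | ¬ u ≠ c} = {c} := by ext u; simp
    rw [hset]
    exact measure_singleton c
  have hyx1 : ∀ t ∈ Icc t0 σ1, y t = xb t := by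
    intro t ht
    have htm : t ∈ Icc t0 T := ⟨ht.1, le_trans ht.2 hσ1m.2⟩
    have hcg : (∫ u in t0..t, -(a * v u)) = ∫ u in t0..t, -(a * ub u) := by
      refine intervalIntegral.integral_congr_ae ?_
      filter_upwards [hae_ne σ1] with u hu hmem
      rw [uIoc_of_le ht.1] at hmem
      have h1 : u < σ1 := lt_of_le_of_ne (le_trans hmem.2 ht.2) hu
      rw [hv_out u (fun hc => absurd hc.1 (not_le.2 h1))]
    show x0 + (∫ u in t0..t, -(a * v u)) = xb t
    rw [hcg, ← hrep t htm]
  have hyz : ∀ t ∈ Icc σ1 σ2, y t = z t := by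
    intro t ht
    have htm : t ∈ Icc t0 T := hIccσ ht
    have h1 : (∫ u in t0..t, -(a * v u)) =
        (∫ u in t0..σ1, -(a * v u)) + ∫ u in σ1..t, -(a * v u) :=
      (intervalIntegral.integral_add_adjacent_intervals (hv_ii ht0T hσ1m)
        (hv_ii hσ1m htm)).symm
    have h2 : x0 + (∫ u in t0..σ1, -(a * v u)) = c1 :=
      hyx1 σ1 ⟨hσ1m.1, le_refl σ1⟩
    have h3 : (∫ u in σ1..t, -(a * v u)) = z t - c1 := by
      rw [← hWz t ht]
      refine intervalIntegral.integral_congr fun u hu => ?_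
      rw [uIcc_of_le ht.1] at hu
      rw [hv_in u hu.1 (le_trans hu.2 ht.2)]
    show x0 + (∫ u in t0..t, -(a * v u)) = z t
    rw [h1, h3]
    linarith only [h2]
  have hyx2 : ∀ t ∈ Icc σ2 T, y t = xb t := by
    intro t ht
    have htm : t ∈ Icc t0 T := ⟨le_trans hσ2m.1 ht.1, ht.2⟩
    have h1 : (∫ u in t0..t, -(a * v u)) =
        (∫ u in t0..σ2, -(a * v u)) + ∫ u in σ2..t, -(a * v u) :=
      (intervalIntegral.integral_add_adjacent_intervals (hv_ii ht0T hσ2m)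
        (hv_ii hσ2m htm)).symm
    have h2 : x0 + (∫ u in t0..σ2, -(a * v u)) = c2 := by
      have h2' := hyz σ2 ⟨hσle, le_refl _⟩
      rw [hzσ2] at h2'
      exact h2'
    have h3 : (∫ u in σ2..t, -(a * v u)) = ∫ u in σ2..t, -(a * ub u) := by
      refine intervalIntegral.integral_congr_ae
        (Filter.Eventually.of_forall fun u hu => ?_)
      rw [uIoc_of_le ht.1] at hu
      rw [hv_out u (fun hc => absurd hc.2 (not_le.2 hu.1))]
    have h4 : (∫ u in σ2..t, -(a * ub u)) = xb t - c2 := (hdiff hσ2m htm).symm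
    show x0 + (∫ u in t0..t, -(a * v u)) = xb t
    rw [h1, h3, h4]
    linarith only [h2]
  -- feasibility of the perturbed process
  have hyfeas : FP3Feasible a t0 T x0 y v := by
    refine ⟨hv_meas, hv_bound, fun t _ => rfl, ?_⟩
    intro t htm
    rcases le_or_gt t σ1 with hc1' | hc1'
    · rw [hyx1 t ⟨htm.1, hc1'⟩]; exact hstate t htm
    rcases le_or_gt t σ2 with hc2' | hc2'
    · rw [hyz t ⟨hc1'.le, hc2'⟩]
      exact ⟨hzlb t ⟨hc1'.le, hc2'⟩, hzub t ⟨hc1'.le, hc2'⟩⟩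
    · rw [hyx2 t ⟨hc2'.le, htm.2⟩]; exact hstate t htm
  -- the W11 distance bound
  have hDf_ii : ∀ {c d : ℝ}, c ∈ Icc t0 T → d ∈ Icc t0 T →
      IntervalIntegrable (fun t => |(-(a * v t)) - (-(a * ub t))|) volume c d := by
    intro c d hc hd
    have := (hv_ii hc hd).sub (hubc_ii hc hd)
    rw [intervalIntegrable_iff] at this ⊢
    exact this.abs
  have hD1 : (∫ t in t0..σ1, |(-(a * v t)) - (-(a * ub t))|) = 0 := by
    have hae : ∀ᵐ u ∂(volume : Measure ℝ), u ∈ Ι t0 σ1 →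
        |(-(a * v u)) - (-(a * ub u))| = 0 := by
      filter_upwards [hae_ne σ1] with u hu hmem
      rw [uIoc_of_le hσ1m.1] at hmem
      have h1 : u < σ1 := lt_of_le_of_ne hmem.2 hu
      rw [hv_out u (fun hc => absurd hc.1 (not_le.2 h1))]
      simp
    rw [intervalIntegral.integral_congr_ae hae]
    simp
  have hD3 : (∫ t in σ2..T, |(-(a * v t)) - (-(a * ub t))|) = 0 := by
    have hae : ∀ᵐ u ∂(volume : Measure ℝ), u ∈ Ι σ2 T →
        |(-(a * v u)) - (-(a * ub u))| = 0 := by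
      refine Filter.Eventually.of_forall fun u hu => ?_
      rw [uIoc_of_le hσ2m.2] at hu
      rw [hv_out u (fun hc => absurd hc.2 (not_le.2 hu.1))]
      simp
    rw [intervalIntegral.integral_congr_ae hae]
    simp
  have hD2 : (∫ t in σ1..σ2, |(-(a * v t)) - (-(a * ub t))|) ≤ 4*a*h := by
    have hb : (fun t => |(-(a * v t)) - (-(a * ub t))|) ≤ᵐ[volume.restrict (Icc σ1 σ2)]
        fun _ => 2*a := by
      have hbb := ae_restrict_of_ae_restrict_of_subset hIccσ hbound
      filter_upwards [hbb, ae_restrict_mem measurableSet_Icc] with u hu hmem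
      rw [hv_in u hmem.1 hmem.2]
      have h1 : |ub u| ≤ 1 := abs_le.2 ⟨hu.1, hu.2⟩
      have h2 := hw_bd u
      have h3 : (-(a * w u)) - (-(a * ub u)) = a * (ub u - w u) := by ring
      rw [h3, abs_mul, abs_of_pos ha]
      have h1' := abs_le.1 h1
      have h2' := abs_le.1 h2
      have h4 : |ub u - w u| ≤ 2 := abs_le.2 ⟨by linarith only [h1', h2'], by linarith only [h1', h2']⟩
      have h5 := mul_le_mul_of_nonneg_left h4 ha.le
      linarith only [h5]
    have hmono := intervalIntegral.integral_mono_ae_restrict hσle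
      (hDf_ii hσ1m hσ2m) intervalIntegrable_const hb
    rw [intervalIntegral.integral_const, smul_eq_mul, hσdiff] at hmono
    linarith only [hmono]
  have hDtot : (∫ t in t0..T, |(-(a * v t)) - (-(a * ub t))|) ≤ δ := by
    have hsplit1 := intervalIntegral.integral_add_adjacent_intervals
      (hDf_ii ht0T hσ1m) (hDf_ii hσ1m hσ2m)
    have hsplit2 := intervalIntegral.integral_add_adjacent_intervals
      (hDf_ii ht0T hσ2m) (hDf_ii hσ2m hTm)
    rw [← hsplit2, ← hsplit1, hD1, hD3]
    linarith only [hD2, hh4]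
  have hcost := hloc y v hyfeas hDtot
  -- now derive the strict cost decrease
  -- interval integrability of the cost integrands
  have hsubC : ∀ {c d : ℝ}, c ∈ Icc t0 T → d ∈ Icc t0 T → uIcc c d ⊆ Icc t0 T :=
    fun hc hd => uIcc_subset_Icc hc hd
  have hEc : Continuous fun t : ℝ => Real.exp (-(lam * t)) := by fun_prop
  have hExb_ii : ∀ {c d : ℝ}, c ∈ Icc t0 T → d ∈ Icc t0 T →
      IntervalIntegrable (fun t => Real.exp (-(lam * t)) * xb t) volume c d := by
    intro c d hc hd
    exact ((hEc.continuousOn.mul hcont).mono (hsubC hc hd)).intervalIntegrable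
  have hEub_ii : ∀ {c d : ℝ}, c ∈ Icc t0 T → d ∈ Icc t0 T →
      IntervalIntegrable (fun t => Real.exp (-(lam * t)) * ub t) volume c d := by
    intro c d hc hd
    rw [intervalIntegrable_iff]
    have hE' : IntegrableOn (fun t => Real.exp (-(lam * t))) (Ι c d) volume :=
      intervalIntegrable_iff.1 (hEc.intervalIntegrable c d)
    have hbd : ∀ᵐ u ∂(volume.restrict (Ι c d)), ‖ub u‖ ≤ 1 := by
      have := ae_restrict_of_ae_restrict_of_subset (hsubI hc hd) hbound
      filter_upwards [this] with u hu
      rw [Real.norm_eq_abs, abs_le]; exact ⟨hu.1, hu.2⟩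
    have := Integrable.bdd_mul hE'
      ((hub_int.mono_set (hsubI hc hd)).aestronglyMeasurable) hbd
    exact this.congr (Filter.Eventually.of_forall fun t => mul_comm _ _)
  have hf1_ii : ∀ {c d : ℝ}, c ∈ Icc t0 T → d ∈ Icc t0 T →
      IntervalIntegrable (fun t => -(Real.exp (-(lam * t)) * (xb t + ub t))) volume c d := by
    intro c d hc hd
    have heq : (fun t => -(Real.exp (-(lam * t)) * (xb t + ub t))) =
        fun t => -((Real.exp (-(lam * t)) * xb t) + Real.exp (-(lam * t)) * ub t) := by
      funext t; ring
    rw [heq]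
    exact ((hExb_ii hc hd).add (hEub_ii hc hd)).neg
  have hEz_ii : ∀ c d : ℝ, IntervalIntegrable
      (fun t => Real.exp (-(lam * t)) * z t) volume c d := by
    intro c d
    exact (hEc.mul hzc).intervalIntegrable c d
  have hEw_ii : ∀ c d : ℝ, IntervalIntegrable
      (fun t => Real.exp (-(lam * t)) * w t) volume c d := by
    intro c d
    rw [intervalIntegrable_iff]
    have hE' : IntegrableOn (fun t => Real.exp (-(lam * t))) (Ι c d) volume :=
      intervalIntegrable_iff.1 (hEc.intervalIntegrable c d)
    have := Integrable.bdd_mul (c := 1) hE' (hw_meas.aestronglyMeasurable)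
      (Filter.Eventually.of_forall fun t => by rw [Real.norm_eq_abs]; exact hw_bd t)
    exact this.congr (Filter.Eventually.of_forall fun t => mul_comm _ _)
  have hgz_ii : ∀ c d : ℝ, IntervalIntegrable
      (fun t => -(Real.exp (-(lam * t)) * (z t + w t))) volume c d := by
    intro c d
    have heq : (fun t => -(Real.exp (-(lam * t)) * (z t + w t))) =
        fun t => -((Real.exp (-(lam * t)) * z t) + Real.exp (-(lam * t)) * w t) := by
      funext t; ring
    rw [heq]
    exact ((hEz_ii c d).add (hEw_ii c d)).neg
  -- pointwise identifications on the three pieces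
  have hpt1 : ∀ᵐ u ∂(volume : Measure ℝ), u ∈ Ι t0 σ1 →
      -(Real.exp (-(lam * u)) * (xb u + ub u)) = -(Real.exp (-(lam * u)) * (y u + v u)) := by
    filter_upwards [hae_ne σ1] with u hne hu
    rw [uIoc_of_le hσ1m.1] at hu
    have h1 : u < σ1 := lt_of_le_of_ne hu.2 hne
    rw [hyx1 u ⟨hu.1.le, hu.2⟩, hv_out u (fun hc => absurd hc.1 (not_le.2 h1))]
  have hpt3 : ∀ᵐ u ∂(volume : Measure ℝ), u ∈ Ι σ2 T →
      -(Real.exp (-(lam * u)) * (xb u + ub u)) = -(Real.exp (-(lam * u)) * (y u + v u)) := by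
    refine Filter.Eventually.of_forall fun u hu => ?_
    rw [uIoc_of_le hσ2m.2] at hu
    rw [hyx2 u ⟨hu.1.le, hu.2⟩, hv_out u (fun hc => absurd hc.2 (not_le.2 hu.1))]
  have hpt2 : EqOn (fun t => -(Real.exp (-(lam * t)) * (z t + w t)))
      (fun t => -(Real.exp (-(lam * t)) * (y t + v t))) (uIcc σ1 σ2) := by
    intro u hu
    rw [uIcc_of_le hσle] at hu
    dsimp only
    rw [hyz u hu, hv_in u hu.1 hu.2]
  have hf2_1 : IntervalIntegrable (fun t => -(Real.exp (-(lam * t)) * (y t + v t)))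
      volume t0 σ1 :=
    (hf1_ii ht0T hσ1m).congr_ae ((ae_restrict_iff' measurableSet_uIoc).2 hpt1)
  have hf2_2 : IntervalIntegrable (fun t => -(Real.exp (-(lam * t)) * (y t + v t)))
      volume σ1 σ2 :=
    (hgz_ii σ1 σ2).congr_ae ((ae_restrict_iff' measurableSet_uIoc).2
      (Filter.Eventually.of_forall fun u hu => hpt2 (uIoc_subset_uIcc hu)))
  have hf2_3 : IntervalIntegrable (fun t => -(Real.exp (-(lam * t)) * (y t + v t)))
      volume σ2 T :=
    (hf1_ii hσ2m hTm).congr_ae ((ae_restrict_iff' measurableSet_uIoc).2 hpt3)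
  -- splitting the costs
  have hcosty : FP3Cost lam t0 T y v =
      (∫ t in t0..σ1, -(Real.exp (-(lam * t)) * (xb t + ub t)))
      + (∫ t in σ1..σ2, -(Real.exp (-(lam * t)) * (z t + w t)))
      + (∫ t in σ2..T, -(Real.exp (-(lam * t)) * (xb t + ub t))) := by
    have hs1 := intervalIntegral.integral_add_adjacent_intervals hf2_1 hf2_2
    have hs2 := intervalIntegral.integral_add_adjacent_intervals (hf2_1.trans hf2_2) hf2_3
    show (∫ t in t0..T, -(Real.exp (-(lam * t)) * (y t + v t))) = _
    rw [← hs2, ← hs1]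
    congr 1
    · congr 1
      · exact (intervalIntegral.integral_congr_ae hpt1).symm
      · exact (intervalIntegral.integral_congr hpt2).symm
    · exact (intervalIntegral.integral_congr_ae hpt3).symm
  have hcostx : FP3Cost lam t0 T xb ub =
      (∫ t in t0..σ1, -(Real.exp (-(lam * t)) * (xb t + ub t)))
      + (∫ t in σ1..σ2, -(Real.exp (-(lam * t)) * (xb t + ub t)))
      + (∫ t in σ2..T, -(Real.exp (-(lam * t)) * (xb t + ub t))) := by
    have hs1 := intervalIntegral.integral_add_adjacent_intervals
      (hf1_ii ht0T hσ1m) (hf1_ii hσ1m hσ2m)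
    have hs2 := intervalIntegral.integral_add_adjacent_intervals
      ((hf1_ii ht0T hσ1m).trans (hf1_ii hσ1m hσ2m)) (hf1_ii hσ2m hTm)
    show (∫ t in t0..T, -(Real.exp (-(lam * t)) * (xb t + ub t))) = _
    rw [← hs2, ← hs1]
  -- positivity of the main term
  set P := ∫ t in σ1..σ2, Real.exp (-(lam * t)) * (z t - xb t) with hPdef
  have hEzxb_cont : ContinuousOn (fun t => Real.exp (-(lam * t)) * (z t - xb t))
      (Icc σ1 σ2) :=
    (hEc.continuousOn).mul ((hzc.continuousOn).sub (hcont.mono hIccσ))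
  have hEzxb_ii : IntervalIntegrable (fun t => Real.exp (-(lam * t)) * (z t - xb t))
      volume σ1 σ2 := by
    apply ContinuousOn.intervalIntegrable
    rwa [uIcc_of_le hσle]
  have hPpos : 0 < P := by
    rw [hPdef]
    apply intervalIntegral.integral_pos hσlt hEzxb_cont
    · intro t ht
      have ht' : t ∈ Icc σ1 σ2 := Ioc_subset_Icc_self ht
      exact mul_nonneg (Real.exp_pos _).le (by linarith only [hzxb t ht'])
    · refine ⟨s, ⟨by rw [hσ1def]; linarith, by rw [hσ2def]; linarith⟩, ?_⟩
      have hzspos : 0 < z s - xb s := by linarith only [hzs, mul_pos ha hh]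
      exact mul_pos (Real.exp_pos _) hzspos
  -- the integration-by-parts relation
  have hw_intOn2 : IntegrableOn w (Ioc σ1 σ2) volume :=
    hw_intOn _ measurableSet_Ioc measure_Ioc_lt_top
  have hub_intOn2 : IntegrableOn ub (Ioc σ1 σ2) volume :=
    hub_int.mono_set (fun u hu => hIccσ ⟨hu.1.le, hu.2⟩)
  have hq_int : IntegrableOn (fun t => w t - ub t) (Ioc σ1 σ2) volume :=
    hw_intOn2.sub hub_intOn2
  have hg_int : IntegrableOn (fun t => -(a * (w t - ub t))) (Ioc σ1 σ2) volume :=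
    (hq_int.const_mul a).neg
  have hg0 : (∫ t in Ioc σ1 σ2, -(a * (w t - ub t))) = 0 := by
    rw [← intervalIntegral.integral_of_le hσle]
    have h1 : (∫ t in σ1..σ2, -(a * (w t - ub t))) =
        (∫ t in σ1..σ2, -(a * w t)) - ∫ t in σ1..σ2, -(a * ub t) := by
      rw [← intervalIntegral.integral_sub (hw_ii σ1 σ2) (hubc_ii hσ1m hσ2m)]
      exact intervalIntegral.integral_congr fun u _ => by ring
    rw [h1, hWz σ2 ⟨hσle, le_refl _⟩, hzσ2, ← hdiff hσ1m hσ2m, hc1def, hc2def]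
    ring
  have hpsi : ∀ t' ∈ Ioc σ1 σ2,
      (∫ u in Ioc σ1 t', -(a * (w u - ub u))) = z t' - xb t' := by
    intro t' ht'
    have htm' : t' ∈ Icc t0 T := hIccσ ⟨ht'.1.le, ht'.2⟩
    rw [← intervalIntegral.integral_of_le ht'.1.le]
    have h1 : (∫ u in σ1..t', -(a * (w u - ub u))) =
        (∫ u in σ1..t', -(a * w u)) - ∫ u in σ1..t', -(a * ub u) := by
      rw [← intervalIntegral.integral_sub (hw_ii σ1 t') (hubc_ii hσ1m htm')]
      exact intervalIntegral.integral_congr fun u _ => by ring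
    rw [h1, hWz t' ⟨ht'.1.le, ht'.2⟩, ← hdiff hσ1m htm', hc1def]
    ring
  have hparts := fp3_parts hlam hσle hg_int hg0
  have hQrel : (∫ t in σ1..σ2, Real.exp (-(lam * t)) * (w t - ub t)) = -(lam/a) * P := by
    have hL : (∫ t in Ioc σ1 σ2, Real.exp (-(lam * t)) * (-(a * (w t - ub t))))
        = -a * ∫ t in Ioc σ1 σ2, Real.exp (-(lam * t)) * (w t - ub t) := by
      rw [← integral_const_mul]
      exact setIntegral_congr_fun measurableSet_Ioc fun u _ => by ring
    have hR : (∫ r' in Ioc σ1 σ2, Real.exp (-(lam * r')) *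
        (∫ t in Ioc σ1 r', -(a * (w t - ub t))))
        = ∫ r' in Ioc σ1 σ2, Real.exp (-(lam * r')) * (z r' - xb r') := by
      exact setIntegral_congr_fun measurableSet_Ioc fun r' hr' => by rw [hpsi r' hr']
    rw [hL, hR] at hparts
    have hPset : P = ∫ t in Ioc σ1 σ2, Real.exp (-(lam * t)) * (z t - xb t) := by
      rw [hPdef, intervalIntegral.integral_of_le hσle]
    rw [intervalIntegral.integral_of_le hσle, hPset]
    field_simp
    linarith only [hparts]
  have hEwub_ii : IntervalIntegrable
      (fun t => Real.exp (-(lam * t)) * (w t - ub t)) volume σ1 σ2 := by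
    have heq : (fun t => Real.exp (-(lam * t)) * (w t - ub t)) =
        fun t => (Real.exp (-(lam * t)) * w t) - Real.exp (-(lam * t)) * ub t := by
      funext t; ring
    rw [heq]
    exact (hEw_ii σ1 σ2).sub (hEub_ii hσ1m hσ2m)
  have hdiff2 : (∫ t in σ1..σ2, -(Real.exp (-(lam * t)) * (z t + w t)))
      - (∫ t in σ1..σ2, -(Real.exp (-(lam * t)) * (xb t + ub t)))
      = -(P + ∫ t in σ1..σ2, Real.exp (-(lam * t)) * (w t - ub t)) := by
    rw [hPdef, ← intervalIntegral.integral_add hEzxb_ii hEwub_ii,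
      ← intervalIntegral.integral_neg,
      ← intervalIntegral.integral_sub (hgz_ii σ1 σ2) (hf1_ii hσ1m hσ2m)]
    exact intervalIntegral.integral_congr fun u _ => by ring
  have h1a : 0 < 1 - lam/a := by
    rw [sub_pos, div_lt_one ha]; exact hal
  have hlt : FP3Cost lam t0 T y v < FP3Cost lam t0 T xb ub := by
    rw [hcosty, hcostx]
    have hkey : (∫ t in σ1..σ2, -(Real.exp (-(lam * t)) * (z t + w t)))
        < ∫ t in σ1..σ2, -(Real.exp (-(lam * t)) * (xb t + ub t)) := by
      have hd2 := hdiff2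
      rw [hQrel] at hd2
      have hd3 : (∫ t in σ1..σ2, -(Real.exp (-(lam * t)) * (z t + w t)))
          - (∫ t in σ1..σ2, -(Real.exp (-(lam * t)) * (xb t + ub t)))
          = -((1 - lam/a) * P) := by linear_combination hd2
      have hq := mul_pos h1a hPpos
      linarith only [hd3, hq]
    exact add_lt_add_left (add_lt_add_right hkey _) _
  exact absurd hcost (not_le.2 hlt)
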